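/- Let f : (0,∞) → ℝ be C². Then the composition f ∘ ρ, with ρ(x,y) = (|x|^{2(α+1)} + |y|²)^{1/(2(α+1))}, satisfies Δ_α(f∘ρ)(x,y) = (|x|^{2α}/ρ^{2α}) ( f''(ρ) + (Q-1)/ρ · f'(ρ) ) at every point with x ≠ 0, where Q = m + n(α+1). -/

import Mathlib

open MeasureTheory

noncomputable section

/-- ℝ^m × ℝ^n as a product of Euclidean spaces. -/
abbrev GSpace (m n : ℕ) := (EuclideanSpace ℝ (Fin m)) × (EuclideanSpace ℝ (Fin n))

/-- Anisotropic Baouendi–Grushin dilation δ_r(x,y) = (r x, r^{α+1} y). -/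
def gDil {m n : ℕ} (α r : ℝ) (z : GSpace m n) : GSpace m n :=
  (r • z.1, (r ^ (α+1) : ℝ) • z.2)

/-- Partial derivative in the i-th x-direction. -/
def pderivX {m n : ℕ} (u : GSpace m n → ℝ) (i : Fin m) (z : GSpace m n) : ℝ :=
  fderiv ℝ u z (EuclideanSpace.single i 1, 0)

/-- Partial derivative in the j-th y-direction. -/
def pderivY {m n : ℕ} (u : GSpace m n → ℝ) (j : Fin n) (z : GSpace m n) : ℝ :=
  fderiv ℝ u z (0, EuclideanSpace.single j 1)

/-- Grushin gradient ∇_α u = (∇_x u, (α+1)|x|^α ∇_y u). -/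
def gradAlpha {m n : ℕ} (α : ℝ) (u : GSpace m n → ℝ) (z : GSpace m n) : GSpace m n :=
  ((WithLp.equiv 2 (Fin m → ℝ)).symm fun i => pderivX u i z,
   (WithLp.equiv 2 (Fin n → ℝ)).symm fun j => (α+1) * ‖z.1‖ ^ α * pderivY u j z)

/-- Baouendi–Grushin operator Δ_α u = Δ_x u + (α+1)²|x|^{2α} Δ_y u. -/
def laplacianAlpha {m n : ℕ} (α : ℝ) (u : GSpace m n → ℝ) (z : GSpace m n) : ℝ :=
  (∑ i, pderivX (pderivX u i) i z) +
    (α+1)^2 * ‖z.1‖ ^ (2*α) * ∑ j, pderivY (pderivY u j) j z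

/-- Generator of dilations Zu = Σ x_i ∂_{x_i} u + (α+1) Σ y_j ∂_{y_j} u,
i.e. the derivative of u at z along the vector (x, (α+1)y). -/
def Zop {m n : ℕ} (α : ℝ) (u : GSpace m n → ℝ) (z : GSpace m n) : ℝ :=
  fderiv ℝ u z (z.1, (α+1) • z.2)

/-- Grushin gauge ρ(x,y) = (|x|^{2(α+1)} + |y|²)^{1/(2(α+1))}. -/
def gGauge {m n : ℕ} (α : ℝ) (z : GSpace m n) : ℝ :=
  (‖z.1‖ ^ (2*(α+1)) + ‖z.2‖ ^ 2) ^ (1/(2*(α+1)))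

/-- Euclidean squared norm of a vector of GSpace. -/
def gnormSq {m n : ℕ} (v : GSpace m n) : ℝ := ‖v.1‖^2 + ‖v.2‖^2

section GrushinRadialAux

variable {m n : ℕ}

def phif (w : GSpace m n) : ℝ := ‖w.1‖^2
def psif (w : GSpace m n) : ℝ := ‖w.2‖^2
def Gf (α : ℝ) (w : GSpace m n) : ℝ := (phif w)^(α+1) + psif w

lemma phif_pos {w : GSpace m n} (hw : w.1 ≠ 0) : 0 < phif w :=
  pow_pos (norm_pos_iff.mpr hw) 2

lemma psif_nonneg (w : GSpace m n) : 0 ≤ psif w := sq_nonneg _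

lemma Gf_pos (α : ℝ) {w : GSpace m n} (hw : w.1 ≠ 0) : 0 < Gf α w :=
  add_pos_of_pos_of_nonneg (Real.rpow_pos_of_pos (phif_pos hw) _) (psif_nonneg w)

def DG (α : ℝ) (w : GSpace m n) : GSpace m n →L[ℝ] ℝ :=
  (((α+1) * (phif w)^(α:ℝ) * 2) • ((innerSL ℝ w.1).comp (ContinuousLinearMap.fst ℝ _ _))) +
  ((2:ℝ) • ((innerSL ℝ w.2).comp (ContinuousLinearMap.snd ℝ _ _)))

lemma hasFDerivAt_psif (w : GSpace m n) :
    HasFDerivAt psif ((2:ℝ) • ((innerSL ℝ w.2).comp (ContinuousLinearMap.snd ℝ _ _))) w := by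
  have h := (hasFDerivAt_snd (p := w) (E := EuclideanSpace ℝ (Fin m)) (F := EuclideanSpace ℝ (Fin n))).norm_sq
  refine h.congr_fderiv ?_
  ext v <;> simp [nsmul_eq_mul]

lemma hasFDerivAt_phif (w : GSpace m n) :
    HasFDerivAt phif ((2:ℝ) • ((innerSL ℝ w.1).comp (ContinuousLinearMap.fst ℝ _ _))) w := by
  have h := (hasFDerivAt_fst (p := w) (E := EuclideanSpace ℝ (Fin m)) (F := EuclideanSpace ℝ (Fin n))).norm_sq
  refine h.congr_fderiv ?_
  ext v <;> simp [nsmul_eq_mul]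

lemma hasFDerivAt_phif_rpow (γ : ℝ) {w : GSpace m n} (hw : w.1 ≠ 0) :
    HasFDerivAt (fun v => (phif v)^γ)
      ((γ * (phif w)^(γ-1) * 2) • ((innerSL ℝ w.1).comp (ContinuousLinearMap.fst ℝ _ _))) w := by
  have h := (Real.hasDerivAt_rpow_const (x := phif w) (p := γ)
    (Or.inl (phif_pos hw).ne')).comp_hasFDerivAt w (hasFDerivAt_phif w)
  refine h.congr_fderiv ?_
  ext v <;> simp [mul_assoc]

lemma hasFDerivAt_Gf (α : ℝ) {w : GSpace m n} (hw : w.1 ≠ 0) :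
    HasFDerivAt (Gf α) (DG α w) w := by
  have h := (hasFDerivAt_phif_rpow (α+1) hw).add (hasFDerivAt_psif w)
  refine h.congr_fderiv ?_
  rw [DG]; norm_num

lemma hasFDerivAt_Gf_rpow (α γ : ℝ) {w : GSpace m n} (hw : w.1 ≠ 0) :
    HasFDerivAt (fun v => (Gf α v)^γ) ((γ * (Gf α w)^(γ-1)) • DG α w) w :=
  (Real.hasDerivAt_rpow_const (x := Gf α w) (p := γ)
    (Or.inl (Gf_pos α hw).ne')).comp_hasFDerivAt w (hasFDerivAt_Gf α hw)

section F
variable (f : ℝ → ℝ)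

lemma hasDerivAt_f (hf : ContDiffOn ℝ 2 f (Set.Ioi 0)) {t : ℝ} (ht : 0 < t) :
    HasDerivAt f (derivWithin f (Set.Ioi 0) t) t := by
  have h1 : DifferentiableAt ℝ f t :=
    (hf.differentiableOn two_ne_zero t ht).differentiableAt (isOpen_Ioi.mem_nhds ht)
  rw [derivWithin_of_isOpen isOpen_Ioi ht]
  exact h1.hasDerivAt

lemma hasDerivAt_f' (hf : ContDiffOn ℝ 2 f (Set.Ioi 0)) {t : ℝ} (ht : 0 < t) :
    HasDerivAt (derivWithin f (Set.Ioi 0))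
      (derivWithin (derivWithin f (Set.Ioi 0)) (Set.Ioi 0) t) t := by
  have h0 : ContDiffOn ℝ 1 (derivWithin f (Set.Ioi 0)) (Set.Ioi 0) :=
    hf.derivWithin (uniqueDiffOn_Ioi 0) (m := 1) (by norm_num)
  have h1 : DifferentiableAt ℝ (derivWithin f (Set.Ioi 0)) t :=
    (h0.differentiableOn one_ne_zero t ht).differentiableAt (isOpen_Ioi.mem_nhds ht)
  rw [derivWithin_of_isOpen isOpen_Ioi ht]
  exact h1.hasDerivAt

/-- coefficient c(w) = f'(ρ(w)) β G^{β-1} -/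
def cf (α : ℝ) (w : GSpace m n) : ℝ :=
  derivWithin f (Set.Ioi 0) ((Gf α w)^(1/(2*(α+1)))) *
    ((1/(2*(α+1))) * (Gf α w)^(1/(2*(α+1))-1))

lemma hasFDerivAt_u (hf : ContDiffOn ℝ 2 f (Set.Ioi 0)) (α : ℝ) {w : GSpace m n}
    (hw : w.1 ≠ 0) :
    HasFDerivAt (fun v => f ((Gf α v)^(1/(2*(α+1))))) ((cf f α w) • DG α w) w := by
  have hρ := hasFDerivAt_Gf_rpow α (1/(2*(α+1))) hw
  have hρpos : 0 < (Gf α w)^(1/(2*(α+1))) := Real.rpow_pos_of_pos (Gf_pos α hw) _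
  have h := (hasDerivAt_f f hf hρpos).comp_hasFDerivAt w hρ
  refine h.congr_fderiv ?_
  rw [cf, smul_smul]

lemma pderivX_eq (hf : ContDiffOn ℝ 2 f (Set.Ioi 0)) (α : ℝ) (i : Fin m) {w : GSpace m n}
    (hw : w.1 ≠ 0) :
    pderivX (fun v => f ((Gf α v)^(1/(2*(α+1))))) i w
      = cf f α w * ((α+1) * (phif w)^(α:ℝ) * 2 * w.1 i) := by
  rw [pderivX, (hasFDerivAt_u f hf α hw).fderiv]
  simp [DG, EuclideanSpace.inner_single_right]

lemma pderivY_eq (hf : ContDiffOn ℝ 2 f (Set.Ioi 0)) (α : ℝ) (j : Fin n) {w : GSpace m n}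
    (hw : w.1 ≠ 0) :
    pderivY (fun v => f ((Gf α v)^(1/(2*(α+1))))) j w
      = cf f α w * (2 * w.2 j) := by
  rw [pderivY, (hasFDerivAt_u f hf α hw).fderiv]
  simp [DG, EuclideanSpace.inner_single_right]

/-- derivative coefficient of cf: K = S·β(β-1)G^{β-2} + P·β²G^{2β-2} -/
def Kf (α : ℝ) (w : GSpace m n) : ℝ :=
  derivWithin f (Set.Ioi 0) ((Gf α w)^(1/(2*(α+1)))) *
      ((1/(2*(α+1))) * ((1/(2*(α+1))-1) * (Gf α w)^(1/(2*(α+1))-2)))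
  + derivWithin (derivWithin f (Set.Ioi 0)) (Set.Ioi 0) ((Gf α w)^(1/(2*(α+1)))) *
      ((1/(2*(α+1))) * (Gf α w)^(1/(2*(α+1))-1)) * ((1/(2*(α+1))) * (Gf α w)^(1/(2*(α+1))-1))

lemma hasFDerivAt_cf (hf : ContDiffOn ℝ 2 f (Set.Ioi 0)) (α : ℝ) {w : GSpace m n}
    (hw : w.1 ≠ 0) :
    HasFDerivAt (cf f α) ((Kf f α w) • DG α w) w := by
  have hρ := hasFDerivAt_Gf_rpow α (1/(2*(α+1))) hw
  have hρpos : 0 < (Gf α w)^(1/(2*(α+1))) := Real.rpow_pos_of_pos (Gf_pos α hw) _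
  have hA := (hasDerivAt_f' f hf hρpos).comp_hasFDerivAt w hρ
  have hB := (hasFDerivAt_Gf_rpow α (1/(2*(α+1))-1) hw).const_mul (1/(2*(α+1)))
  have h := hA.mul hB
  refine h.congr_fderiv ?_
  rw [Kf]
  ext v <;> simp <;> ring
end F

section F2
variable (f : ℝ → ℝ)

lemma hasFDerivAt_coordX (i : Fin m) (w : GSpace m n) :
    HasFDerivAt (fun v : GSpace m n => v.1 i)
      ((EuclideanSpace.proj i).comp (ContinuousLinearMap.fst ℝ _ _)) w := by
  have h := ((EuclideanSpace.proj i).comp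
    (ContinuousLinearMap.fst ℝ (EuclideanSpace ℝ (Fin m))
      (EuclideanSpace ℝ (Fin n)))).hasFDerivAt (x := w)
  exact h.congr_of_eventuallyEq (Filter.Eventually.of_forall fun v => rfl)

lemma hasFDerivAt_coordY (j : Fin n) (w : GSpace m n) :
    HasFDerivAt (fun v : GSpace m n => v.2 j)
      ((EuclideanSpace.proj j).comp (ContinuousLinearMap.snd ℝ _ _)) w := by
  have h := ((EuclideanSpace.proj j).comp
    (ContinuousLinearMap.snd ℝ (EuclideanSpace ℝ (Fin m))
      (EuclideanSpace ℝ (Fin n)))).hasFDerivAt (x := w)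
  exact h.congr_of_eventuallyEq (Filter.Eventually.of_forall fun v => rfl)

lemma isOpen_xne : IsOpen {w : GSpace m n | w.1 ≠ 0} :=
  isOpen_compl_singleton.preimage continuous_fst

lemma secondX (hf : ContDiffOn ℝ 2 f (Set.Ioi 0)) (α : ℝ) (i : Fin m) {z : GSpace m n}
    (hz : z.1 ≠ 0) :
    pderivX (pderivX (fun v => f ((Gf α v)^(1/(2*(α+1))))) i) i z =
      (Kf f α z * ((α+1) * (phif z)^(α:ℝ) * 2)^2
        + cf f α z * ((α+1) * (α * (phif z)^(α-1:ℝ) * 2) * 2)) * (z.1 i * z.1 i)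
      + cf f α z * ((α+1) * (phif z)^(α:ℝ) * 2) := by
  have heq : pderivX (fun v => f ((Gf α v)^(1/(2*(α+1))))) i
      =ᶠ[nhds z] fun w => cf f α w * ((α+1) * (phif w)^(α:ℝ) * 2 * w.1 i) := by
    filter_upwards [isOpen_xne.mem_nhds hz] with w hw
    exact pderivX_eq f hf α i hw
  have hH := (((hasFDerivAt_phif_rpow α hz).const_mul (α+1)).mul_const 2).mul
    (hasFDerivAt_coordX i z)
  have hPx := (hasFDerivAt_cf f hf α hz).mul hH
  rw [pderivX, heq.fderiv_eq, (show HasFDerivAt (fun w => cf f α w * ((α+1) * (phif w)^(α:ℝ) * 2 * w.1 i)) _ z from hPx).fderiv]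
  simp [DG, EuclideanSpace.inner_single_right]
  ring

lemma secondY (hf : ContDiffOn ℝ 2 f (Set.Ioi 0)) (α : ℝ) (j : Fin n) {z : GSpace m n}
    (hz : z.1 ≠ 0) :
    pderivY (pderivY (fun v => f ((Gf α v)^(1/(2*(α+1))))) j) j z =
      (Kf f α z * 4) * (z.2 j * z.2 j) + cf f α z * 2 := by
  have heq : pderivY (fun v => f ((Gf α v)^(1/(2*(α+1))))) j
      =ᶠ[nhds z] fun w => cf f α w * (2 * w.2 j) := by
    filter_upwards [isOpen_xne.mem_nhds hz] with w hw
    exact pderivY_eq f hf α j hw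
  have hH := (hasFDerivAt_coordY (m := m) j z).const_mul (2:ℝ)
  have hPy := (hasFDerivAt_cf f hf α hz).mul hH
  rw [pderivY, heq.fderiv_eq, (show HasFDerivAt (fun w => cf f α w * (2 * w.2 j)) _ z from hPy).fderiv]
  simp [DG, EuclideanSpace.inner_single_right]
  ring

lemma sum_coord_sq_X (z : GSpace m n) : ∑ i, z.1 i * z.1 i = phif z := by
  rw [phif, EuclideanSpace.norm_eq, Real.sq_sqrt (by positivity)]
  simp [sq]

lemma sum_coord_sq_Y (z : GSpace m n) : ∑ j, z.2 j * z.2 j = psif z := by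
  rw [psif, EuclideanSpace.norm_eq, Real.sq_sqrt (by positivity)]
  simp [sq]

lemma sumX (hf : ContDiffOn ℝ 2 f (Set.Ioi 0)) (α : ℝ) {z : GSpace m n} (hz : z.1 ≠ 0) :
    ∑ i, pderivX (pderivX (fun v => f ((Gf α v)^(1/(2*(α+1))))) i) i z =
      (Kf f α z * ((α+1) * (phif z)^(α:ℝ) * 2)^2
        + cf f α z * ((α+1) * (α * (phif z)^(α-1:ℝ) * 2) * 2)) * phif z
      + (m:ℝ) * (cf f α z * ((α+1) * (phif z)^(α:ℝ) * 2)) := by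
  rw [Finset.sum_congr rfl fun i _ => secondX f hf α i hz, Finset.sum_add_distrib,
    ← Finset.mul_sum, sum_coord_sq_X, Finset.sum_const, Finset.card_univ]
  simp [nsmul_eq_mul]

lemma sumY (hf : ContDiffOn ℝ 2 f (Set.Ioi 0)) (α : ℝ) {z : GSpace m n} (hz : z.1 ≠ 0) :
    ∑ j, pderivY (pderivY (fun v => f ((Gf α v)^(1/(2*(α+1))))) j) j z =
      (Kf f α z * 4) * psif z + (n:ℝ) * (cf f α z * 2) := by
  rw [Finset.sum_congr rfl fun j _ => secondY f hf α j hz, Finset.sum_add_distrib,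
    ← Finset.mul_sum, sum_coord_sq_Y, Finset.sum_const, Finset.card_univ]
  simp [nsmul_eq_mul]
end F2

lemma gGauge_eq (α : ℝ) (w : GSpace m n) :
    gGauge α w = (Gf α w) ^ (1/(2*(α+1))) := by
  have : ‖w.1‖ ^ (2*(α+1)) = (phif w)^(α+1) := by
    rw [phif, ← Real.rpow_natCast ‖w.1‖ 2, ← Real.rpow_mul (norm_nonneg _)]
    norm_num
  rw [gGauge, Gf, this, psif]

lemma norm_rpow_two_mul (α : ℝ) (w : GSpace m n) :
    ‖w.1‖ ^ (2*α) = (phif w)^(α:ℝ) := by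
  rw [phif, show (2*α) = ((2:ℕ):ℝ)*α by norm_num, Real.rpow_mul (norm_nonneg _),
    Real.rpow_natCast]


end GrushinRadialAux

set_option maxHeartbeats 2000000 in
/-- Radial formula for the Baouendi–Grushin operator:
Δ_α(f∘ρ) = (|x|^{2α}/ρ^{2α}) (f''(ρ) + (Q-1)/ρ · f'(ρ)) for x ≠ 0. -/
theorem laplacianAlpha_radial {m n : ℕ} (α : ℝ) (hα : 0 ≤ α)
    (f : ℝ → ℝ) (hf : ContDiffOn ℝ 2 f (Set.Ioi 0)) :
    ∀ z : GSpace m n, z.1 ≠ 0 →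
      laplacianAlpha α (fun w => f (gGauge α w)) z =
        ‖z.1‖ ^ (2*α) / (gGauge α z) ^ (2*α) *
          (derivWithin (derivWithin f (Set.Ioi 0)) (Set.Ioi 0) (gGauge α z) +
            (((m : ℝ) + n*(α+1)) - 1) / gGauge α z *
              derivWithin f (Set.Ioi 0) (gGauge α z)) := by
  intro z hz
  have hφ := phif_pos hz
  have hG := Gf_pos α hz
  have hα1 : (0:ℝ) < α+1 := by linarith
  have ha : 0 < (Gf α z)^(1/(2*(α+1))) := Real.rpow_pos_of_pos hG _
  have hfun : (fun w : GSpace m n => f (gGauge α w))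
      = fun w => f ((Gf α w)^(1/(2*(α+1)))) := funext fun w => by rw [gGauge_eq]
  have hn : ‖z.1‖ ^ (2*α) = (phif z)^(α:ℝ) := norm_rpow_two_mul α z
  rw [laplacianAlpha, hfun, sumX f hf α hz, sumY f hf α hz, gGauge_eq, hn]
  simp only [cf, Kf]
  have e1 : (phif z)^(α-1:ℝ) = (phif z)^(α:ℝ)/phif z := Real.rpow_sub_one hφ.ne' _
  have e3 : (Gf α z)^(1/(2*(α+1))-1) = (Gf α z)^(1/(2*(α+1)))/(Gf α z) :=
    Real.rpow_sub_one hG.ne' _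
  have e4 : (Gf α z)^(1/(2*(α+1))-2)
      = (Gf α z)^(1/(2*(α+1)))/(Gf α z * Gf α z) := by
    rw [show (1/(2*(α+1))-2) = (1/(2*(α+1))-1)-1 by ring, Real.rpow_sub_one hG.ne',
      Real.rpow_sub_one hG.ne', div_div]
  have e5 : ((Gf α z)^(1/(2*(α+1))))^(2*α)
      = Gf α z / ((Gf α z)^(1/(2*(α+1))) * (Gf α z)^(1/(2*(α+1)))) := by
    rw [← Real.rpow_mul hG.le,
      show (1/(2*(α+1)))*(2*α) = 1 - (1/(2*(α+1)) + 1/(2*(α+1))) by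
        field_simp; ring,
      Real.rpow_sub hG, Real.rpow_add hG, Real.rpow_one]
  have hGdef : Gf α z = (phif z)^(α:ℝ) * phif z + psif z := by
    rw [Gf, Real.rpow_add_one hφ.ne']
  rw [e1, e3, e4, e5]
  set φ := phif z with hφd
  set ψ := psif z with hψd
  set A := φ^(α:ℝ) with hAd
  set G := Gf α z with hGd
  set a := G^(1/(2*(α+1))) with had
  set S := derivWithin f (Set.Ioi 0) a with hSd
  set P := derivWithin (derivWithin f (Set.Ioi 0)) (Set.Ioi 0) a with hPd
  have hne : A*φ+ψ ≠ 0 := by rw [← hGdef]; exact hG.ne'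
  rw [hGdef]
  field_simp
  ring

end
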